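/- Let S ⊆ K be subrings of a finite ring R. Then Pr(S,K) ≤ |K:S| · Pr(K), with equality if and only if S = K, where Pr(K) = Pr(K,K). -/

import Mathlib

/-- `Pr_r(S,K)`: the probability that a uniformly random pair `(s,k) ∈ S × K`
satisfies `s*k - k*s = r`. -/
noncomputable def ringPr {R : Type*} [NonUnitalRing R] [Fintype R]
    (S K : NonUnitalSubring R) (r : R) : ℚ :=
  (Nat.card {p : R × R // p.1 ∈ S ∧ p.2 ∈ K ∧ p.1 * p.2 - p.2 * p.1 = r} : ℚ) /
    ((Nat.card S : ℚ) * (Nat.card K : ℚ))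

theorem ringPr_le_index_mul {R : Type*} [NonUnitalRing R] [Fintype R]
    (S K : NonUnitalSubring R) (hSK : S ≤ K) :
    ringPr S K 0 ≤ ((Nat.card K : ℚ) / (Nat.card S : ℚ)) * ringPr K K 0 ∧
      (ringPr S K 0 = ((Nat.card K : ℚ) / (Nat.card S : ℚ)) * ringPr K K 0 ↔ S = K) := by
  classical
  set A : Set (R × R) := {p | p.1 ∈ S ∧ p.2 ∈ K ∧ p.1 * p.2 - p.2 * p.1 = 0} with hA
  set B : Set (R × R) := {p | p.1 ∈ K ∧ p.2 ∈ K ∧ p.1 * p.2 - p.2 * p.1 = 0} with hB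
  have hAB : A ⊆ B := fun p hp => ⟨hSK hp.1, hp.2⟩
  have hBfin : B.Finite := Set.toFinite _
  have hSne : Nonempty S := ⟨0, S.zero_mem⟩
  have hKne : Nonempty K := ⟨0, K.zero_mem⟩
  have hS0 : (0:ℚ) < (Nat.card S : ℚ) := by exact_mod_cast (Nat.card_pos : 0 < Nat.card S)
  have hK0 : (0:ℚ) < (Nat.card K : ℚ) := by exact_mod_cast (Nat.card_pos : 0 < Nat.card K)
  have hcardA : (Nat.card {p : R × R // p.1 ∈ S ∧ p.2 ∈ K ∧ p.1 * p.2 - p.2 * p.1 = 0})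
      = A.ncard := Nat.card_coe_set_eq A
  have hcardB : (Nat.card {p : R × R // p.1 ∈ K ∧ p.2 ∈ K ∧ p.1 * p.2 - p.2 * p.1 = 0})
      = B.ncard := Nat.card_coe_set_eq B
  have hle : A.ncard ≤ B.ncard := Set.ncard_le_ncard hAB hBfin
  have hL : ringPr S K 0 = (A.ncard : ℚ) / ((Nat.card S : ℚ) * (Nat.card K : ℚ)) := by
    rw [ringPr, hcardA]
  have hRr : ((Nat.card K : ℚ) / (Nat.card S : ℚ)) * ringPr K K 0
      = (B.ncard : ℚ) / ((Nat.card S : ℚ) * (Nat.card K : ℚ)) := by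
    rw [ringPr, hcardB]
    field_simp
  constructor
  · rw [hL, hRr]
    apply div_le_div_of_nonneg_right _ (by positivity)
    · exact_mod_cast hle
  · rw [hL, hRr]
    constructor
    · intro h
      have hnum : (A.ncard : ℚ) = (B.ncard : ℚ) := by
        have hd : ((Nat.card S : ℚ) * (Nat.card K : ℚ)) ≠ 0 := by positivity
        field_simp at h
        exact_mod_cast h
      have hcard : B.ncard ≤ A.ncard := le_of_eq (by exact_mod_cast hnum.symm)
      have hABeq : A = B := Set.eq_of_subset_of_ncard_le hAB hcard hBfin
      refine le_antisymm hSK ?_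
      intro k hk
      have : (k, k) ∈ B := ⟨hk, hk, sub_self _⟩
      rw [← hABeq] at this
      exact this.1
    · intro h
      subst h
      rfl
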